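/- Let F be a field and x_1,…,x_n ∈ X, y_1,…,y_n ∈ Y, z_1,…,z_n ∈ Z with d = dim span{x_i}. Suppose Condition U holds: for every α ∈ F^n, rank(Σ α_i y_i ⊗ z_i) ≥ min(ω(α), n − d + 2). If Σ_{i=1}^n x_i ⊗ y_i ⊗ z_i = Σ_{i=1}^n v_i ⊗ u_i ⊗ w_i for some v_i ∈ X, u_i ∈ Y, w_i ∈ Z, then span{x_1,…,x_n} ⊆ span{v_1,…,v_n}. -/
import Mathlib


open TensorProduct

/-- The rank of a 2-tensor: minimal number of simple tensors summing to it. -/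
noncomputable def tensorRank2 {F Y Z : Type*} [Field F]
    [AddCommGroup Y] [Module F Y] [AddCommGroup Z] [Module F Z]
    (t : TensorProduct F Y Z) : ℕ :=
  sInf {m | ∃ (a : Fin m → Y) (b : Fin m → Z), t = ∑ i, a i ⊗ₜ[F] b i}

lemma tensorRank2_zero {F Y Z : Type*} [Field F]
    [AddCommGroup Y] [Module F Y] [AddCommGroup Z] [Module F Z] :
    tensorRank2 (0 : TensorProduct F Y Z) = 0 := by
  apply Nat.sInf_eq_zero.mpr
  left
  exact ⟨Fin.elim0, Fin.elim0, by simp⟩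

/-- Under Condition U, any other representation `∑ vᵢ ⊗ uᵢ ⊗ wᵢ` of
`∑ xᵢ ⊗ yᵢ ⊗ zᵢ` satisfies `span {xᵢ} ⊆ span {vᵢ}`. -/
theorem conditionU_span_subset
    (F X Y Z : Type*) [Field F] [AddCommGroup X] [Module F X]
    [AddCommGroup Y] [Module F Y] [AddCommGroup Z] [Module F Z]
    (n : ℕ) (x v : Fin n → X) (y u : Fin n → Y) (z w : Fin n → Z)
    (d : ℕ) (hd : Module.finrank F (Submodule.span F (Set.range x)) = d)
    (hU : ∀ α : Fin n → F,
      min ({i | α i ≠ 0}.ncard) (n - d + 2) ≤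
        tensorRank2 (∑ i, α i • (y i ⊗ₜ[F] z i)))
    (h : ∑ i, x i ⊗ₜ[F] (y i ⊗ₜ[F] z i) = ∑ i, v i ⊗ₜ[F] (u i ⊗ₜ[F] w i)) :
    Submodule.span F (Set.range x) ≤ Submodule.span F (Set.range v) := by
  rw [Submodule.span_le]
  rintro _ ⟨j, rfl⟩
  by_contra hxj
  obtain ⟨η, hηx, hηv⟩ :=
    (Submodule.span F (Set.range v)).exists_dual_map_eq_bot_of_notMem hxj inferInstance
  have hηv' : ∀ i, η (v i) = 0 := by
    intro i
    have : η (v i) ∈ (Submodule.span F (Set.range v)).map η :=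
      ⟨v i, Submodule.subset_span ⟨i, rfl⟩, rfl⟩
    rw [hηv] at this
    simpa using this
  -- apply η to the first factor
  set L : TensorProduct F X (TensorProduct F Y Z) →ₗ[F] TensorProduct F Y Z :=
    (TensorProduct.lid F (TensorProduct F Y Z)).toLinearMap ∘ₗ
      TensorProduct.map η LinearMap.id with hL
  have hLapp : ∀ (a : X) (t : TensorProduct F Y Z), L (a ⊗ₜ[F] t) = η a • t := by
    intro a t; simp [hL]
  have key : ∑ i, (η (x i)) • (y i ⊗ₜ[F] z i) = 0 := by
    have := congrArg L h
    rw [map_sum, map_sum] at this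
    simp only [hLapp] at this
    rw [this]
    apply Finset.sum_eq_zero
    intro i _
    rw [hηv' i, zero_smul]
  have hmin := hU (fun i => η (x i))
  rw [key, tensorRank2_zero, Nat.le_zero, Nat.min_eq_zero_iff] at hmin
  rcases hmin with hmin | hmin
  · have hfin : {i : Fin n | η (x i) ≠ 0}.Finite := Set.toFinite _
    have : {i : Fin n | η (x i) ≠ 0} = ∅ :=
      (Set.ncard_eq_zero hfin).mp hmin
    exact hηx (by simpa using Set.eq_empty_iff_forall_notMem.mp this j)
  · omega
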